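/- Let p be a prime and n ≥ 1, and let E be a subgroup of GL_n(ZMod p) whose order is not divisible by p and which contains an element of order p^n − 1. If H is a nontrivial normal subgroup of E, then the only vector v ∈ (ZMod p)^n fixed by every element of H is v = 0. -/

import Mathlib

open Matrix
open scoped MatrixGroups

open Polynomial in
private lemma aux_card_adjoin_le {p n : ℕ} [Fact p.Prime] (hn : 1 ≤ n)
    (A : Matrix (Fin n) (Fin n) (ZMod p)) :
    Nat.card (Algebra.adjoin (ZMod p) {A}) ≤ p ^ n := by
  have hsurj : Function.Surjective
      (fun c : Fin n → ZMod p => (⟨∑ i : Fin n, c i • A ^ (i : ℕ),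
        Subalgebra.sum_mem _ fun i _ => Subalgebra.smul_mem _
          (Subalgebra.pow_mem _ (Algebra.self_mem_adjoin_singleton _ _) _) _⟩ :
        Algebra.adjoin (ZMod p) {A})) := by
    rintro ⟨r, hr⟩
    rw [Algebra.adjoin_singleton_eq_range_aeval] at hr
    obtain ⟨q, rfl⟩ := hr
    refine ⟨fun i => (q %ₘ A.charpoly).coeff i, ?_⟩
    ext : 1
    have hdeg : (q %ₘ A.charpoly).natDegree < n := by
      have h1 := natDegree_modByMonic_lt q A.charpoly_monic ?_
      · rwa [A.charpoly_natDegree_eq_dim, Fintype.card_fin] at h1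
      · intro h1
        have := A.charpoly_natDegree_eq_dim
        rw [h1, natDegree_one, Fintype.card_fin] at this
        omega
    show _ = aeval A q
    rw [A.aeval_eq_aeval_mod_charpoly q, aeval_eq_sum_range' hdeg]
    rw [Finset.sum_range fun i => (q %ₘ A.charpoly).coeff i • A ^ i]
  calc Nat.card (Algebra.adjoin (ZMod p) {A}) ≤ Nat.card (Fin n → ZMod p) :=
        Nat.card_le_card_of_surjective _ hsurj
    _ = p ^ n := by simp [Nat.card_eq_fintype_card, ZMod.card]

private lemma aux_adjoin_field {p n : ℕ} [Fact p.Prime] (hn : 1 ≤ n) (g : GL (Fin n) (ZMod p))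
    (hg : orderOf g = p ^ n - 1)
    (hcard_le : Nat.card (Algebra.adjoin (ZMod p)
      {(g : Matrix (Fin n) (Fin n) (ZMod p))}) ≤ p ^ n) :
    (∀ r : Algebra.adjoin (ZMod p) {(g : Matrix (Fin n) (Fin n) (ZMod p))}, r ≠ 0 →
      ∃ s, s * r = 1) ∧
    p ^ n = Nat.card (Algebra.adjoin (ZMod p) {(g : Matrix (Fin n) (Fin n) (ZMod p))}) := by
  set A : Matrix (Fin n) (Fin n) (ZMod p) := (g : Matrix (Fin n) (Fin n) (ZMod p)) with hA
  set R := Algebra.adjoin (ZMod p) {A} with hR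
  have hp2 : 2 ≤ p := (Fact.out : p.Prime).two_le
  have hpn2 : 2 ≤ p ^ n := le_trans hp2 (Nat.le_self_pow (by omega) p)
  set k := p ^ n - 1 with hk
  have hk1 : 1 ≤ k := by omega
  set A' : R := ⟨A, Algebra.self_mem_adjoin_singleton _ _⟩ with hA'
  have hgk : g ^ k = 1 := by rw [← hg]; exact pow_orderOf_eq_one g
  have hA'k : A' ^ k = 1 := by
    apply Subtype.ext
    push_cast
    show A ^ k = 1
    rw [hA, ← Units.val_pow_eq_pow_val, hgk, Units.val_one]
  have hkk : k - 1 + 1 = k := by omega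
  set u : Rˣ := ⟨A', A' ^ (k-1), by rw [← pow_succ', hkk, hA'k], by rw [← pow_succ, hkk, hA'k]⟩
    with hu
  have hRval : Function.Injective (Subalgebra.val R).toRingHom.toMonoidHom :=
    Subtype.val_injective
  have humap : Units.map (Subalgebra.val R).toRingHom.toMonoidHom u = g := by
    apply Units.ext
    rfl
  have horder : orderOf u = k := by
    rw [← hg, ← humap]
    exact (orderOf_injective _ (Units.map_injective hRval) u).symm
  haveI : Finite R := Subtype.finite
  have hdvd : k ∣ Nat.card Rˣ := by
    rw [← horder]
    exact orderOf_dvd_natCard u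
  have hRne : Nonempty (Fin n) := ⟨⟨0, hn⟩⟩
  have h10 : (1 : R) ≠ 0 := by
    intro h
    have h2 : (1 : Matrix (Fin n) (Fin n) (ZMod p)) = 0 := congrArg Subtype.val h
    have := congrFun (congrFun h2 ⟨0, hn⟩) ⟨0, hn⟩
    simp at this
  haveI : Nontrivial R := ⟨1, 0, h10⟩
  set e : Option Rˣ → R := fun w => w.elim 0 (fun w => (w : R)) with he
  have hei : Function.Injective e := by
    rintro (_|a) (_|b) hab
    · rfl
    · exact absurd hab.symm b.ne_zero
    · exact absurd hab a.ne_zero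
    · exact congrArg some (Units.ext hab)
  haveI : Fintype R := Fintype.ofFinite _
  haveI : Fintype Rˣ := Fintype.ofFinite _
  have hcardopt : Nat.card (Option Rˣ) = Nat.card Rˣ + 1 := by
    simp [Nat.card_eq_fintype_card, Fintype.card_option]
  have hle1 : Nat.card Rˣ + 1 ≤ Nat.card R := by
    have := Nat.card_le_card_of_injective e hei
    rwa [hcardopt] at this
  have hle2 : k ≤ Nat.card Rˣ := Nat.le_of_dvd Nat.card_pos hdvd
  have hcards : Nat.card Rˣ + 1 = Nat.card R ∧ p ^ n = Nat.card R := by omega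
  have hbij : Function.Bijective e := by
    rw [Nat.bijective_iff_injective_and_card]
    refine ⟨hei, ?_⟩
    rw [hcardopt]
    exact hcards.1
  refine ⟨?_, hcards.2⟩
  intro r hr
  obtain ⟨w, hw⟩ := hbij.2 r
  match w, hw with
  | none, hw => exact absurd hw.symm hr
  | some w, hw =>
    refine ⟨w.inv, ?_⟩
    rw [show (r : R) = w from hw.symm]
    exact w.inv_val

/-- Let `E` be a `p'`-subgroup of `GL n (ZMod p)` containing a Singer cycle, and let `H`
be a nontrivial normal subgroup of `E`. Then the only vector of `(ZMod p) ^ n` fixed by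
every element of `H` is `0`. -/
theorem normal_subgroup_no_fixed_points (p n : ℕ) (hp : p.Prime) (hn : 1 ≤ n)
    (E : Subgroup (GL (Fin n) (ZMod p))) (hE : ¬ p ∣ Nat.card E)
    (g : GL (Fin n) (ZMod p)) (hgE : g ∈ E) (hg : orderOf g = p ^ n - 1)
    (H : Subgroup E) (hHne : H ≠ ⊥) (hHnormal : H.Normal)
    (v : Fin n → ZMod p)
    (hfix : ∀ h : E, h ∈ H →
      ((h : GL (Fin n) (ZMod p)) : Matrix (Fin n) (Fin n) (ZMod p)).mulVec v = v) :
    v = 0 := by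
  haveI := Fact.mk hp
  by_contra hv
  set A : Matrix (Fin n) (Fin n) (ZMod p) := (g : Matrix (Fin n) (Fin n) (ZMod p)) with hA
  obtain ⟨hunit, hcardR⟩ := aux_adjoin_field hn g hg (aux_card_adjoin_le hn A)
  set R := Algebra.adjoin (ZMod p) {A} with hR
  -- the subspace of vectors fixed by all of `H`
  set W : Submodule (ZMod p) (Fin n → ZMod p) :=
  { carrier := {w | ∀ h : E, h ∈ H →
      ((h : GL (Fin n) (ZMod p)) : Matrix (Fin n) (Fin n) (ZMod p)).mulVec w = w}
    add_mem' := fun {a b} ha hb h hh => by rw [Matrix.mulVec_add, ha h hh, hb h hh]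
    zero_mem' := fun h hh => Matrix.mulVec_zero _
    smul_mem' := fun c a ha h hh => by rw [Matrix.mulVec_smul, ha h hh] } with hW
  have hvW : v ∈ W := hfix
  -- `W` is stable under the matrix `A`
  have hAT : ∀ w ∈ W, A.mulVec w ∈ W := by
    intro w hw h hh
    set gE : E := ⟨g, hgE⟩ with hgEdef
    have hconj : gE⁻¹ * h * gE ∈ H := by
      have := hHnormal.conj_mem h hh gE⁻¹
      simpa using this
    have key := hw _ hconj
    have hC : (((gE⁻¹ * h * gE : E) : GL (Fin n) (ZMod p)) : Matrix (Fin n) (Fin n) (ZMod p))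
        = ((g⁻¹ : GL (Fin n) (ZMod p)) : Matrix (Fin n) (Fin n) (ZMod p))
          * (((h : GL (Fin n) (ZMod p)) : Matrix (Fin n) (Fin n) (ZMod p)) * A) := by
      simp [hgEdef, Units.val_mul, mul_assoc, hA]
    rw [hC] at key
    have h1 : A * ((g⁻¹ : GL (Fin n) (ZMod p)) : Matrix (Fin n) (Fin n) (ZMod p)) = 1 := by
      rw [← Units.val_mul, mul_inv_cancel, Units.val_one]
    calc ((h : GL (Fin n) (ZMod p)) : Matrix (Fin n) (Fin n) (ZMod p)).mulVec (A.mulVec w)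
        = ((((h : GL (Fin n) (ZMod p)) : Matrix (Fin n) (Fin n) (ZMod p)) * A)).mulVec w :=
          Matrix.mulVec_mulVec w _ _
      _ = ((A * (((g⁻¹ : GL (Fin n) (ZMod p)) : Matrix (Fin n) (Fin n) (ZMod p))
            * (((h : GL (Fin n) (ZMod p)) : Matrix (Fin n) (Fin n) (ZMod p)) * A)))).mulVec w := by
          rw [← mul_assoc, h1, one_mul]
      _ = A.mulVec ((((g⁻¹ : GL (Fin n) (ZMod p)) : Matrix (Fin n) (Fin n) (ZMod p))
            * (((h : GL (Fin n) (ZMod p)) : Matrix (Fin n) (Fin n) (ZMod p)) * A)).mulVec w) :=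
          (Matrix.mulVec_mulVec w _ _).symm
      _ = A.mulVec w := by rw [key]
  -- hence `W` is stable under all of `R`
  have hstab : ∀ B ∈ R, ∀ w ∈ W, B.mulVec w ∈ W := by
    set T : Subalgebra (ZMod p) (Matrix (Fin n) (Fin n) (ZMod p)) :=
    { carrier := {B | ∀ w ∈ W, B.mulVec w ∈ W}
      mul_mem' := fun {a b} ha hb w hw => by
        rw [← Matrix.mulVec_mulVec]
        exact ha _ (hb w hw)
      one_mem' := fun w hw => by rwa [Matrix.one_mulVec]
      add_mem' := fun {a b} ha hb w hw => by
        rw [Matrix.add_mulVec]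
        exact W.add_mem (ha w hw) (hb w hw)
      zero_mem' := fun w hw => by
        rw [Matrix.zero_mulVec]
        exact W.zero_mem
      algebraMap_mem' := fun c w hw => by
        rw [Algebra.algebraMap_eq_smul_one, Matrix.smul_mulVec, Matrix.one_mulVec]
        exact W.smul_mem c hw } with hT
    have hle : R ≤ T := Algebra.adjoin_le (Set.singleton_subset_iff.mpr hAT)
    exact fun B hB => hle hB
  -- the map `r ↦ r *ᵥ v` is injective from `R` to `W`
  have hinj : Function.Injective
      (fun r : R => ((r : Matrix (Fin n) (Fin n) (ZMod p)).mulVec v)) := by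
    intro r1 r2 h12
    by_contra hne
    have hsub : ((r1 - r2 : R) : Matrix (Fin n) (Fin n) (ZMod p)).mulVec v = 0 := by
      push_cast
      rw [Matrix.sub_mulVec]
      rw [show ((r1 : Matrix (Fin n) (Fin n) (ZMod p)).mulVec v) = _ from h12]
      exact sub_self _
    obtain ⟨s, hs⟩ := hunit (r1 - r2) (sub_ne_zero.mpr hne)
    apply hv
    have h2 : ((s * (r1 - r2) : R) : Matrix (Fin n) (Fin n) (ZMod p)).mulVec v = v := by
      rw [hs]
      push_cast
      rw [Matrix.one_mulVec]
    calc v = ((s * (r1 - r2) : R) : Matrix (Fin n) (Fin n) (ZMod p)).mulVec v := h2.symm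
      _ = (s : Matrix (Fin n) (Fin n) (ZMod p)).mulVec
            (((r1 - r2 : R) : Matrix (Fin n) (Fin n) (ZMod p)).mulVec v) := by
          push_cast
          rw [Matrix.mulVec_mulVec]
      _ = 0 := by rw [hsub, Matrix.mulVec_zero]
  -- cardinality comparison: `W` is everything
  haveI : Finite R := Subtype.finite
  have hpsi : Function.Injective (fun r : R =>
      (⟨(r : Matrix (Fin n) (Fin n) (ZMod p)).mulVec v, hstab _ r.2 v hvW⟩ : W)) := by
    intro r1 r2 h12
    exact hinj (congrArg Subtype.val h12)
  have hWcard : p ^ n ≤ Nat.card W := by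
    rw [hcardR]
    exact Nat.card_le_card_of_injective _ hpsi
  have hVcard : Nat.card (Fin n → ZMod p) = p ^ n := by
    simp [Nat.card_eq_fintype_card, ZMod.card]
  have hWbij : Function.Bijective ((↑) : W → (Fin n → ZMod p)) := by
    rw [Nat.bijective_iff_injective_and_card]
    refine ⟨Subtype.val_injective, le_antisymm ?_ ?_⟩
    · exact Nat.card_le_card_of_injective _ Subtype.val_injective
    · rw [hVcard]; exact hWcard
  have hall : ∀ x : Fin n → ZMod p, x ∈ W := by
    intro x
    obtain ⟨⟨y, hy⟩, rfl⟩ := hWbij.2 x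
    exact hy
  -- conclude `H = ⊥`, contradiction
  obtain ⟨a, hane⟩ := Subgroup.ne_bot_iff_exists_ne_one.mp hHne
  apply hane
  have hfixall : ∀ x : Fin n → ZMod p,
      (((a.1 : E) : GL (Fin n) (ZMod p)) : Matrix (Fin n) (Fin n) (ZMod p)).mulVec x = x :=
    fun x => hall x a.1 a.2
  have hmat : (((a.1 : E) : GL (Fin n) (ZMod p)) : Matrix (Fin n) (Fin n) (ZMod p)) = 1 := by
    ext i j
    have := congrFun (hfixall (Pi.single j 1)) i
    simpa [Matrix.mulVec_single, Matrix.one_apply, Pi.single_apply] using this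
  exact Subtype.ext (Subtype.ext (Units.ext hmat))
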